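/- Let I : ℝ → ℝ be continuous, and suppose there exist constants η > 2 and γ > 0 such that 0 < η·∫₀ᵘ I(ξ) dξ ≤ u·I(u) for all u with |u| ≥ γ. Then there exist constants a > 0 and b > 0 such that ∫₀ᵘ I(ξ) dξ ≥ a·|u|^η − b for all u ∈ ℝ. -/

import Mathlib

open Set

/-- Gronwall-type lemma: if `η F(u) ≤ u F'(u)` for `u ≥ γ > 0`, then
`F(u) ≥ F(γ) γ^(-η) u^η` for `u ≥ γ`. -/
lemma aux_gronwall (F f : ℝ → ℝ) (η γ : ℝ) (hη : 0 < η) (hγ : 0 < γ)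
    (hF : ∀ u, HasDerivAt F (f u) u)
    (h : ∀ u, γ ≤ u → η * F u ≤ u * f u) :
    ∀ u, γ ≤ u → F γ * γ ^ (-η) * u ^ η ≤ F u := by
  set H : ℝ → ℝ := fun u => F u * u ^ (-η) with hHdef
  have hderiv : ∀ u : ℝ, 0 < u →
      HasDerivAt H (f u * u ^ (-η) + F u * (-η * u ^ (-η - 1))) u := by
    intro u hu
    exact (hF u).mul (Real.hasDerivAt_rpow_const (Or.inl hu.ne'))
  have hmono : MonotoneOn H (Set.Ici γ) := by
    apply monotoneOn_of_deriv_nonneg (convex_Ici γ)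
    · intro x hx
      exact ((hderiv x (lt_of_lt_of_le hγ hx)).differentiableAt.continuousAt).continuousWithinAt
    · intro x hx
      rw [interior_Ici] at hx
      exact ((hderiv x (hγ.trans hx)).differentiableAt).differentiableWithinAt
    · intro x hx
      rw [interior_Ici] at hx
      have hx0 : 0 < x := hγ.trans hx
      rw [(hderiv x hx0).deriv]
      have key : η * F x ≤ x * f x := h x hx.le
      have e : x ^ (-η) = x ^ (-η - 1) * x := by
        rw [← Real.rpow_add_one hx0.ne' (-η - 1)]; ring_nf
      have hpow : (0:ℝ) ≤ x ^ (-η - 1) := Real.rpow_nonneg hx0.le _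
      calc (0:ℝ) ≤ x ^ (-η - 1) * (x * f x - η * F x) :=
            mul_nonneg hpow (sub_nonneg.2 key)
        _ = f x * x ^ (-η) + F x * (-η * x ^ (-η - 1)) := by rw [e]; ring
  intro u hu
  have hmem : γ ∈ Set.Ici γ := Set.self_mem_Ici
  have hmem' : u ∈ Set.Ici γ := hu
  have hHle : F γ * γ ^ (-η) ≤ F u * u ^ (-η) := hmono hmem hmem' hu
  have hu0 : 0 < u := hγ.trans_le hu
  have := mul_le_mul_of_nonneg_right hHle (Real.rpow_nonneg hu0.le η)
  calc F γ * γ ^ (-η) * u ^ η ≤ F u * u ^ (-η) * u ^ η := this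
    _ = F u := by
        rw [mul_assoc, ← Real.rpow_add hu0, neg_add_cancel, Real.rpow_zero, mul_one]

/-- Under the Ambrosetti–Rabinowitz-type condition `0 < η·∫₀ᵘ I ≤ u·I(u)` for `|u| ≥ γ`,
the primitive of the impulse function `I` satisfies `∫₀ᵘ I ≥ a·|u|^η − b` on all of `ℝ`. -/
theorem statement4 (I : ℝ → ℝ) (hI : Continuous I)
    (η γ : ℝ) (hη : 2 < η) (hγ : 0 < γ)
    (hAR : ∀ u : ℝ, γ ≤ |u| →
      0 < η * (∫ ξ in (0:ℝ)..u, I ξ) ∧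
        η * (∫ ξ in (0:ℝ)..u, I ξ) ≤ u * I u) :
    ∃ a b : ℝ, 0 < a ∧ 0 < b ∧ ∀ u : ℝ,
      a * |u| ^ η - b ≤ ∫ ξ in (0:ℝ)..u, I ξ := by
  have hη0 : 0 < η := by linarith
  set F : ℝ → ℝ := fun u => ∫ ξ in (0:ℝ)..u, I ξ with hFdef
  have hF : ∀ u, HasDerivAt F (I u) u := fun u =>
    intervalIntegral.integral_hasDerivAt_right (hI.intervalIntegrable 0 u)
      (hI.stronglyMeasurable.stronglyMeasurableAtFilter) hI.continuousAt
  -- positive side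
  have habsγ : γ ≤ |γ| := le_abs_self γ
  have hFγ : 0 < F γ := by
    have := (hAR γ habsγ).1
    nlinarith
  have hpos : ∀ u, γ ≤ u → F γ * γ ^ (-η) * u ^ η ≤ F u := by
    apply aux_gronwall F I η γ hη0 hγ hF
    intro u hu
    exact (hAR u (hu.trans (le_abs_self u))).2
  -- negative side
  set G : ℝ → ℝ := fun v => F (-v) with hGdef
  have hG : ∀ v, HasDerivAt G (-(I (-v))) v := by
    intro v
    have := (hF (-v)).comp v (hasDerivAt_neg v)
    simp [mul_comm] at this
    exact this
  have habsγ' : γ ≤ |(-γ)| := by rw [abs_neg]; exact habsγ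
  have hGγ : 0 < G γ := by
    have := (hAR (-γ) habsγ').1
    simp only [hGdef]
    nlinarith
  have hneg : ∀ v, γ ≤ v → G γ * γ ^ (-η) * v ^ η ≤ G v := by
    apply aux_gronwall G (fun v => -(I (-v))) η γ hη0 hγ hG
    intro v hv
    have habs : γ ≤ |(-v)| := by rw [abs_neg]; exact hv.trans (le_abs_self v)
    have := (hAR (-v) habs).2
    simp only [hGdef]
    nlinarith
  -- combine
  set c₁ : ℝ := F γ * γ ^ (-η) with hc₁
  set c₂ : ℝ := G γ * γ ^ (-η) with hc₂
  have hγpow : 0 < γ ^ (-η) := Real.rpow_pos_of_pos hγ _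
  have hc₁pos : 0 < c₁ := mul_pos hFγ hγpow
  have hc₂pos : 0 < c₂ := mul_pos hGγ hγpow
  set a : ℝ := min c₁ c₂ with ha
  have hapos : 0 < a := lt_min hc₁pos hc₂pos
  -- lower bound of F on [-γ, γ]
  have hcomp : IsCompact (Set.Icc (-γ) γ) := isCompact_Icc
  have hne : (Set.Icc (-γ) γ).Nonempty := ⟨0, by constructor <;> linarith⟩
  obtain ⟨x₀, _, hmin⟩ := hcomp.exists_isMinOn hne
    (fun x _ => (hF x).continuousAt.continuousWithinAt)
  set m : ℝ := F x₀ with hm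
  set b : ℝ := max (a * γ ^ η - m) 0 + 1 with hb
  have hb1 : a * γ ^ η - m ≤ b - 1 := by
    simp only [hb, add_sub_cancel_right]; exact le_max_left _ _
  have hb0 : 0 < b := by
    have : (0:ℝ) ≤ max (a * γ ^ η - m) 0 := le_max_right _ _
    simp only [hb]; linarith
  refine ⟨a, b, hapos, hb0, ?_⟩
  intro u
  rcases le_or_gt γ u with hu | hu
  · -- u ≥ γ
    have h1 := hpos u hu
    have habs : |u| = u := abs_of_pos (hγ.trans_le hu)
    have hupow : (0:ℝ) ≤ u ^ η := Real.rpow_nonneg (hγ.trans_le hu).le _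
    have h2 : a * u ^ η ≤ c₁ * u ^ η := mul_le_mul_of_nonneg_right (min_le_left _ _) hupow
    rw [habs]
    linarith
  · rcases le_or_gt u (-γ) with hu' | hu'
    · -- u ≤ -γ
      have h1 := hneg (-u) (by linarith)
      have hGu : G (-u) = F u := by simp [hGdef]
      rw [hGu] at h1
      have habs : |u| = -u := abs_of_neg (by linarith)
      have hupow : (0:ℝ) ≤ (-u) ^ η := Real.rpow_nonneg (by linarith) _
      have h2 : a * (-u) ^ η ≤ c₂ * (-u) ^ η :=
        mul_le_mul_of_nonneg_right (min_le_right _ _) hupow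
      rw [habs]
      linarith
    · -- |u| ≤ γ
      have hmem : u ∈ Set.Icc (-γ) γ := ⟨hu'.le, hu.le⟩
      have hFm : m ≤ F u := hmin hmem
      have habs : |u| ≤ γ := abs_le.2 ⟨hu'.le, hu.le⟩
      have hpow : |u| ^ η ≤ γ ^ η :=
        Real.rpow_le_rpow (abs_nonneg u) habs hη0.le
      have h2 : a * |u| ^ η ≤ a * γ ^ η := mul_le_mul_of_nonneg_left hpow hapos.le
      linarith
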